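/- Let f_1, ..., f_m be cop-SOS convex polynomials where f_i depends only on variables in Δ_i, and let y* be any feasible point of the sparse moment relaxation of order k (so A·π(y*) = b, C·π(y*) ≥ d, y*_0 = 1, and the moment and localizing matrices of each block y*_{Δ_i} are positive semidefinite). Then the point x* = π(y*) is feasible for the problem min{f(x) : Ax = b, Cx ≥ d, x ≥ 0} and f(x*) ≤ ⟨f, y*⟩. Consequently, if y* is optimal for the moment relaxation, then the relaxation value equals the true minimum and x* is a global minimizer. -/

import Mathlib

open MvPolynomial Matrix

/-- A polynomial is a sum of squares (SOS). -/
def IsSOS {n : ℕ} (σ : MvPolynomial (Fin n) ℝ) : Prop :=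
  ∃ l : List (MvPolynomial (Fin n) ℝ), σ = (l.map (fun q => q ^ 2)).sum

/-- A polynomial `p` is cop-SOS convex if its Hessian has a decomposition
`∇²p(x) = P₀(x)P₀(x)ᵀ + ∑ᵢ xᵢ·Pᵢ(x)Pᵢ(x)ᵀ` for matrix polynomials `Pᵢ`. -/
def CopSOSConvex {n : ℕ} (p : MvPolynomial (Fin n) ℝ) : Prop :=
  ∃ (r : ℕ) (P0 : Matrix (Fin n) (Fin r) (MvPolynomial (Fin n) ℝ))
    (P : Fin n → Matrix (Fin n) (Fin r) (MvPolynomial (Fin n) ℝ)),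
    ∀ (x : Fin n → ℝ) (i j : Fin n),
      eval x (pderiv i (pderiv j p)) =
        ((P0.map (eval x)) * (P0.map (eval x))ᵀ
          + ∑ l, x l • ((P l).map (eval x) * ((P l).map (eval x))ᵀ)) i j

/-- The Riesz pairing of a polynomial with a (truncated) moment vector. -/
noncomputable def riesz {n : ℕ} (p : MvPolynomial (Fin n) ℝ)
    (y : (Fin n →₀ ℕ) → ℝ) : ℝ :=
  ∑ α ∈ p.support, MvPolynomial.coeff α p * y α

namespace Aux

variable {n : ℕ}

/-! ### riesz basics -/

lemma riesz_eq_sum (p : MvPolynomial (Fin n) ℝ) (y : (Fin n →₀ ℕ) → ℝ)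
    (T : Finset (Fin n →₀ ℕ)) (h : p.support ⊆ T) :
    riesz p y = ∑ α ∈ T, MvPolynomial.coeff α p * y α := by
  unfold riesz
  refine Finset.sum_subset h (fun α _ hα => ?_)
  rw [MvPolynomial.notMem_support_iff.mp hα, zero_mul]

lemma riesz_add (p q : MvPolynomial (Fin n) ℝ) (y) :
    riesz (p + q) y = riesz p y + riesz q y := by
  rw [riesz_eq_sum (p + q) y (p.support ∪ q.support) MvPolynomial.support_add,
    riesz_eq_sum p y (p.support ∪ q.support) Finset.subset_union_left,
    riesz_eq_sum q y (p.support ∪ q.support) Finset.subset_union_right,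
    ← Finset.sum_add_distrib]
  refine Finset.sum_congr rfl fun α _ => ?_
  rw [MvPolynomial.coeff_add]; ring

lemma riesz_zero (y) : riesz (0 : MvPolynomial (Fin n) ℝ) y = 0 := by
  simp [riesz]

lemma riesz_smul (c : ℝ) (p : MvPolynomial (Fin n) ℝ) (y) :
    riesz (c • p) y = c * riesz p y := by
  rw [riesz_eq_sum (c • p) y p.support (MvPolynomial.support_smul), riesz, Finset.mul_sum]
  refine Finset.sum_congr rfl fun α _ => ?_
  rw [MvPolynomial.coeff_smul]; simp [mul_assoc]

lemma riesz_C (c : ℝ) (y) : riesz (MvPolynomial.C c : MvPolynomial (Fin n) ℝ) y = c * y 0 := by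
  rcases eq_or_ne c 0 with rfl | hc
  · simp [riesz]
  · rw [riesz_eq_sum _ y {0} ?_]
    · simp
    · intro α hα
      have := MvPolynomial.mem_support_iff.mp hα
      rw [MvPolynomial.coeff_C] at this
      by_cases h : α = 0 <;> simp_all

lemma riesz_X (j : Fin n) (y) :
    riesz (MvPolynomial.X j : MvPolynomial (Fin n) ℝ) y = y (Finsupp.single j 1) := by
  rw [riesz, MvPolynomial.support_X]
  simp

lemma riesz_finset_sum {ι : Type*} (s : Finset ι) (g : ι → MvPolynomial (Fin n) ℝ) (y) :
    riesz (∑ i ∈ s, g i) y = ∑ i ∈ s, riesz (g i) y := by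
  classical
  induction s using Finset.induction_on with
  | empty => simp [riesz_zero]
  | insert _ _ h ih => rw [Finset.sum_insert h, Finset.sum_insert h, riesz_add, ih]

lemma riesz_sub (p q : MvPolynomial (Fin n) ℝ) (y) :
    riesz (p - q) y = riesz p y - riesz q y := by
  have : p - q + q = p := by ring
  have h := riesz_add (p - q) q y
  rw [this] at h; linarith

/-! ### IsSOS basics -/

lemma isSOS_zero : IsSOS (0 : MvPolynomial (Fin n) ℝ) := ⟨[], rfl⟩

lemma isSOS_one : IsSOS (1 : MvPolynomial (Fin n) ℝ) := ⟨[1], by simp⟩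

lemma isSOS_sq (q : MvPolynomial (Fin n) ℝ) : IsSOS (q ^ 2) := ⟨[q], by simp⟩

lemma IsSOS.add {p q : MvPolynomial (Fin n) ℝ} (hp : IsSOS p) (hq : IsSOS q) :
    IsSOS (p + q) := by
  obtain ⟨l1, rfl⟩ := hp; obtain ⟨l2, rfl⟩ := hq
  exact ⟨l1 ++ l2, by simp⟩

lemma isSOS_sum {ι : Type*} (s : Finset ι) (g : ι → MvPolynomial (Fin n) ℝ)
    (h : ∀ i ∈ s, IsSOS (g i)) : IsSOS (∑ i ∈ s, g i) := by
  classical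
  induction s using Finset.induction_on with
  | empty => simpa using isSOS_zero
  | insert _ _ hnot ih =>
    rw [Finset.sum_insert hnot]
    exact IsSOS.add (h _ (Finset.mem_insert_self _ _))
      (ih fun i hi => h i (Finset.mem_insert_of_mem hi))

lemma isSOS_sum_sq {ι : Type*} (s : Finset ι) (g : ι → MvPolynomial (Fin n) ℝ) :
    IsSOS (∑ i ∈ s, g i ^ 2) :=
  isSOS_sum s _ fun i _ => isSOS_sq (g i)

lemma IsSOS.smul {p : MvPolynomial (Fin n) ℝ} {c : ℝ} (hc : 0 ≤ c) (hp : IsSOS p) :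
    IsSOS (c • p) := by
  obtain ⟨l, rfl⟩ := hp
  refine ⟨l.map (fun q => MvPolynomial.C (Real.sqrt c) * q), ?_⟩
  rw [List.map_map]
  induction l with
  | nil => simp
  | cons a l ih =>
    simp only [List.map_cons, List.sum_cons, smul_add, ih, Function.comp_apply]
    congr 1
    rw [MvPolynomial.smul_eq_C_mul, mul_pow, ← MvPolynomial.C_pow, Real.sq_sqrt hc]

lemma IsSOS.map {p : MvPolynomial (Fin n) ℝ} (φ : MvPolynomial (Fin n) ℝ →+* MvPolynomial (Fin n) ℝ)
    (hp : IsSOS p) : IsSOS (φ p) := by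
  obtain ⟨l, rfl⟩ := hp
  refine ⟨l.map φ, ?_⟩
  simp [map_list_sum, List.map_map, Function.comp_def, map_pow]

lemma IsSOS.eval_nonneg {p : MvPolynomial (Fin n) ℝ} (hp : IsSOS p) (x : Fin n → ℝ) :
    0 ≤ MvPolynomial.eval x p := by
  obtain ⟨l, rfl⟩ := hp
  rw [map_list_sum, List.map_map]
  refine List.sum_nonneg fun a ha => ?_
  obtain ⟨q, _, rfl⟩ := List.mem_map.mp ha
  simp only [Function.comp_apply, map_pow]
  positivity

end Aux

namespace Aux

variable {n : ℕ}

/-! ### zmap : kill variables outside Δ -/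

noncomputable def zmap (Δ : Finset (Fin n)) :
    MvPolynomial (Fin n) ℝ →ₐ[ℝ] MvPolynomial (Fin n) ℝ :=
  MvPolynomial.aeval (fun j => if j ∈ Δ then MvPolynomial.X j else 0)

lemma eval_zmap (Δ : Finset (Fin n)) (x : Fin n → ℝ) (p : MvPolynomial (Fin n) ℝ) :
    MvPolynomial.eval x (zmap Δ p) =
      MvPolynomial.eval (fun j => if j ∈ Δ then x j else 0) p := by
  induction p using MvPolynomial.induction_on with
  | C c => simp [zmap]
  | add p q hp hq => simp [map_add, hp, hq]
  | mul_X p j hp =>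
    have hX : MvPolynomial.eval x (zmap Δ (MvPolynomial.X j)) =
        (fun j => if j ∈ Δ then x j else 0) j := by
      by_cases h : j ∈ Δ <;> simp [zmap, h]
    rw [_root_.map_mul, _root_.map_mul, hp, hX, _root_.map_mul, MvPolynomial.eval_X]

lemma zmap_mem_supported (Δ : Finset (Fin n)) (p : MvPolynomial (Fin n) ℝ) :
    zmap Δ p ∈ MvPolynomial.supported ℝ (Δ : Set (Fin n)) := by
  induction p using MvPolynomial.induction_on with
  | C c => simpa [zmap, MvPolynomial.algebraMap_eq] using
      Subalgebra.algebraMap_mem (MvPolynomial.supported ℝ (Δ : Set (Fin n))) c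
  | add p q hp hq => rw [map_add]; exact add_mem hp hq
  | mul_X p j hp =>
    rw [_root_.map_mul]
    refine mul_mem hp ?_
    simp only [zmap, MvPolynomial.aeval_X]
    by_cases h : j ∈ Δ
    · simp only [if_pos h]
      exact MvPolynomial.X_mem_supported.mpr h
    · simp only [if_neg h]
      exact zero_mem _

lemma zmap_fix {Δ : Finset (Fin n)} {p : MvPolynomial (Fin n) ℝ}
    (hp : p ∈ MvPolynomial.supported ℝ (Δ : Set (Fin n))) : zmap Δ p = p := by
  rw [MvPolynomial.supported_eq_adjoin_X] at hp
  induction hp using Algebra.adjoin_induction with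
  | mem q hq =>
    obtain ⟨j, hj, rfl⟩ := hq
    simp [zmap, Finset.mem_coe.mp hj]
  | algebraMap c => simp [zmap]
  | add a b _ _ ha hb => rw [map_add, ha, hb]
  | mul a b _ _ ha hb => rw [_root_.map_mul, ha, hb]

lemma pderiv_eq_zero_of_not_mem {Δ : Finset (Fin n)} {p : MvPolynomial (Fin n) ℝ}
    (hp : p ∈ MvPolynomial.supported ℝ (Δ : Set (Fin n))) {j : Fin n} (hj : j ∉ Δ) :
    MvPolynomial.pderiv j p = 0 := by
  have hv : ↑p.vars ⊆ (Δ : Set (Fin n)) := (MvPolynomial.mem_supported).mp hp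
  have hjv : j ∉ p.vars := fun h => hj (by exact_mod_cast hv h)
  rw [← MvPolynomial.support_sum_monomial_coeff p, map_sum]
  refine Finset.sum_eq_zero fun α hα => ?_
  rw [MvPolynomial.pderiv_monomial]
  have : α j = 0 := by
    by_contra h
    exact hjv ((MvPolynomial.mem_vars j).mpr ⟨α, hα, Finsupp.mem_support_iff.mpr h⟩)
  simp [this]

/-! ### line substitution -/

noncomputable def lineMap (a : Fin n → ℝ) :
    MvPolynomial (Fin n) ℝ →ₐ[ℝ] Polynomial (MvPolynomial (Fin n) ℝ) :=
  MvPolynomial.aeval (fun j =>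
    Polynomial.C (MvPolynomial.C (a j)) +
      Polynomial.C (MvPolynomial.X j - MvPolynomial.C (a j)) * Polynomial.X)

lemma eval_lineMap (a x : Fin n → ℝ) (t : ℝ) (p : MvPolynomial (Fin n) ℝ) :
    Polynomial.eval t (Polynomial.map (MvPolynomial.eval x) (lineMap a p)) =
      MvPolynomial.eval (fun j => a j + t * (x j - a j)) p := by
  induction p using MvPolynomial.induction_on with
  | C c => simp [lineMap]
  | add p q hp hq => simp [hp, hq]
  | mul_X p j hp =>
    have hX : Polynomial.eval t (Polynomial.map (MvPolynomial.eval x)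
        (lineMap a (MvPolynomial.X j))) = a j + t * (x j - a j) := by
      simp [lineMap]; ring
    rw [_root_.map_mul, Polynomial.map_mul, Polynomial.eval_mul, hp, hX,
      _root_.map_mul, MvPolynomial.eval_X]

lemma derivative_lineMap (a : Fin n → ℝ) (p : MvPolynomial (Fin n) ℝ) :
    Polynomial.derivative (lineMap a p) =
      ∑ j, Polynomial.C (MvPolynomial.X j - MvPolynomial.C (a j)) *
        lineMap a (MvPolynomial.pderiv j p) := by
  induction p using MvPolynomial.induction_on with
  | C c => simp [lineMap]
  | add p q hp hq => simp [map_add, hp, hq, Finset.sum_add_distrib, mul_add]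
  | mul_X p j hp =>
    rw [_root_.map_mul, Polynomial.derivative_mul, hp]
    have hXj : ∀ l, MvPolynomial.pderiv l (p * MvPolynomial.X j) =
        MvPolynomial.pderiv l p * MvPolynomial.X j +
          (if l = j then p else 0) := by
      intro l
      rw [MvPolynomial.pderiv_mul, MvPolynomial.pderiv_X]
      by_cases h : l = j
      · subst h; simp [Pi.single_eq_same]
      · simp [Pi.single_eq_of_ne h, h]
    simp only [hXj, map_add, _root_.map_mul, mul_add, Finset.sum_add_distrib]
    have h1 : ∑ l, Polynomial.C (MvPolynomial.X l - MvPolynomial.C (a l)) *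
        lineMap a (if l = j then p else 0) =
        Polynomial.C (MvPolynomial.X j - MvPolynomial.C (a j)) * lineMap a p := by
      rw [Finset.sum_eq_single j]
      · simp
      · intro l _ hl; simp [hl]
      · intro h; exact absurd (Finset.mem_univ j) h
    rw [h1]
    have h2 : Polynomial.derivative (lineMap a (MvPolynomial.X j)) =
        Polynomial.C (MvPolynomial.X j - MvPolynomial.C (a j)) := by
      simp [lineMap]
    rw [h2, Finset.sum_mul]
    refine congrArg₂ (· + ·) ?_ ?_
    · exact Finset.sum_congr rfl fun l _ => by ring
    · ring

end Aux

namespace Aux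

variable {n : ℕ}

/-! ### One-variable sign lemma -/

lemma onevar (a : Polynomial ℝ) (hneg : ∀ s : ℝ, 0 < s → a.eval s ≤ 0)
    (d : ℕ) (hd : 0 < d) (hcoeffs : ∀ e, d < e → a.coeff e = 0) :
    a.coeff d ≤ 0 := by
  by_contra hpos
  push_neg at hpos
  have hnd : a.natDegree = d := by
    have h1 : a.natDegree ≤ d := Polynomial.natDegree_le_iff_coeff_eq_zero.mpr hcoeffs
    have h2 : d ≤ a.natDegree := Polynomial.le_natDegree_of_ne_zero (ne_of_gt hpos)
    omega
  have hlead : 0 ≤ a.leadingCoeff := by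
    rw [Polynomial.leadingCoeff, hnd]; exact le_of_lt hpos
  have hdeg : 0 < a.degree := by
    rw [Polynomial.degree_eq_natDegree (fun h => by simp [h] at hpos), hnd]
    exact_mod_cast hd
  have htend := Polynomial.tendsto_atTop_of_leadingCoeff_nonneg a hdeg hlead
  obtain ⟨s, hs1, hs0⟩ :=
    ((htend.eventually (Filter.eventually_ge_atTop (1:ℝ))).and
      (Filter.eventually_gt_atTop (0:ℝ))).exists
  linarith [hneg s hs0]

/-! ### Line polynomial from homogeneous components -/

lemma eval_smul_homogeneous {p : MvPolynomial (Fin n) ℝ} {e : ℕ}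
    (hp : p.IsHomogeneous e) (u : Fin n → ℝ) (s : ℝ) :
    MvPolynomial.eval (s • u) p = s ^ e * MvPolynomial.eval u p := by
  rw [MvPolynomial.eval_eq' (s • u) p, MvPolynomial.eval_eq' u p, Finset.mul_sum]
  refine Finset.sum_congr rfl fun α hα => ?_
  have hdeg : ∑ i, α i = e := by
    have h1 := hp (MvPolynomial.mem_support_iff.mp hα)
    rw [← h1]
    rw [Finsupp.weight_apply]
    rw [Finsupp.sum]
    rw [Finset.sum_subset (Finset.subset_univ α.support)]
    · simp
    · intro i _ hi
      simp [Finsupp.notMem_support_iff.mp hi]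
  have : ∏ i, (s • u) i ^ α i = s ^ e * ∏ i, u i ^ α i := by
    rw [← hdeg]
    rw [← Finset.prod_pow_eq_pow_sum]
    rw [← Finset.prod_mul_distrib]
    refine Finset.prod_congr rfl fun i _ => ?_
    rw [Pi.smul_apply, smul_eq_mul, mul_pow]
  rw [this]; ring

noncomputable def linepoly (σ : MvPolynomial (Fin n) ℝ) (u : Fin n → ℝ) (N : ℕ) :
    Polynomial ℝ :=
  ∑ e ∈ Finset.range N, Polynomial.C
    (MvPolynomial.eval u (MvPolynomial.homogeneousComponent e σ)) * Polynomial.X ^ e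

lemma linepoly_eval (σ : MvPolynomial (Fin n) ℝ) (u : Fin n → ℝ) (N : ℕ)
    (hN : σ.totalDegree < N) (s : ℝ) :
    (linepoly σ u N).eval s = MvPolynomial.eval (s • u) σ := by
  unfold linepoly
  rw [Polynomial.eval_finset_sum]
  have hdecomp : σ = ∑ e ∈ Finset.range N, MvPolynomial.homogeneousComponent e σ := by
    rw [← Finset.sum_range_add_sum_Ico _ (Nat.succ_le_of_lt hN)]
    rw [MvPolynomial.sum_homogeneousComponent]
    rw [Finset.sum_Ico_eq_sum_range]
    rw [left_eq_add]
    refine Finset.sum_eq_zero fun e _ => ?_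
    exact MvPolynomial.homogeneousComponent_eq_zero _ σ (by omega)
  conv_rhs => rw [hdecomp]
  rw [map_sum]
  refine Finset.sum_congr rfl fun e _ => ?_
  rw [eval_smul_homogeneous (MvPolynomial.homogeneousComponent_isHomogeneous e σ) u s,
    Polynomial.eval_mul, Polynomial.eval_C, Polynomial.eval_pow, Polynomial.eval_X, mul_comm]

lemma linepoly_coeff (σ : MvPolynomial (Fin n) ℝ) (u : Fin n → ℝ) (N : ℕ) (e : ℕ) (he : e < N) :
    (linepoly σ u N).coeff e =
      MvPolynomial.eval u (MvPolynomial.homogeneousComponent e σ) := by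
  unfold linepoly
  rw [Polynomial.finset_sum_coeff]
  rw [Finset.sum_eq_single e]
  · simp
  · intro b _ hb
    rw [Polynomial.coeff_C_mul, Polynomial.coeff_X_pow, if_neg (fun h => hb h.symm), mul_zero]
  · intro h; exact absurd (Finset.mem_range.mpr he) h

lemma linepoly_coeff_zero (σ : MvPolynomial (Fin n) ℝ) (u : Fin n → ℝ) (N e : ℕ) (hN : N ≤ e) :
    (linepoly σ u N).coeff e = 0 := by
  unfold linepoly
  rw [Polynomial.finset_sum_coeff]
  refine Finset.sum_eq_zero fun b hb => ?_
  rw [Polynomial.coeff_C_mul, Polynomial.coeff_X_pow, if_neg, mul_zero]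
  intro h; subst h; exact absurd (Finset.mem_range.mp hb) (by omega)

/-- Top homogeneous component of a nonzero polynomial is nonzero. -/
lemma top_ne_zero {σ : MvPolynomial (Fin n) ℝ} (h : σ ≠ 0) :
    MvPolynomial.homogeneousComponent σ.totalDegree σ ≠ 0 := by
  obtain ⟨α, hα, hdeg⟩ : ∃ α ∈ σ.support, (α.sum fun _ e => e) = σ.totalDegree := by
    have hne : σ.support.Nonempty := MvPolynomial.support_nonempty.mpr h
    obtain ⟨α, hα, hsup⟩ := Finset.exists_mem_eq_sup σ.support hne (fun α => α.sum fun _ e => e)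
    exact ⟨α, hα, hsup.symm⟩
  intro hzero
  have := MvPolynomial.coeff_homogeneousComponent σ.totalDegree σ α
  rw [hzero] at this
  simp only [MvPolynomial.coeff_zero] at this
  rw [if_pos] at this
  · exact MvPolynomial.mem_support_iff.mp hα this.symm
  · exact hdeg

/-- A polynomial vanishing on the open positive orthant is zero. -/
lemma vanish_pos (g : MvPolynomial (Fin n) ℝ)
    (h : ∀ u : Fin n → ℝ, (∀ j, 0 < u j) → MvPolynomial.eval u g = 0) : g = 0 := by
  apply MvPolynomial.funext (q := 0)
  intro w
  rw [map_zero]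
  set one : Fin n → ℝ := fun _ => 1 with hone
  set g1 : Polynomial ℝ := Polynomial.map (MvPolynomial.eval w) (lineMap one g) with hg1
  have hev : ∀ t : ℝ, g1.eval t = MvPolynomial.eval (fun j => 1 + t * (w j - 1)) g := by
    intro t; exact eval_lineMap one w t g
  set B : ℝ := ∑ j, |w j - 1| with hB
  have hBnn : 0 ≤ B := Finset.sum_nonneg fun j _ => abs_nonneg _
  set δ : ℝ := (1 + B)⁻¹ with hδ
  have hδpos : 0 < δ := by positivity
  have hroots : ∀ t ∈ Set.Ioo 0 δ, g1.eval t = 0 := by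
    intro t ht
    rw [hev t]
    apply h
    intro j
    have habs : |w j - 1| ≤ B := by
      rw [hB]
      exact Finset.single_le_sum (f := fun j => |w j - 1|) (fun j _ => abs_nonneg _)
        (Finset.mem_univ j)
    have h1 : t * |w j - 1| < 1 := by
      calc t * |w j - 1| ≤ t * B := by
            apply mul_le_mul_of_nonneg_left habs (le_of_lt ht.1)
        _ < δ * (1 + B) := by
            apply lt_of_le_of_lt (mul_le_mul_of_nonneg_right (le_of_lt ht.2) hBnn)
            rw [mul_lt_mul_iff_right₀ hδpos]; linarith
        _ = 1 := by rw [hδ]; field_simp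
    have h2 : -(t * (w j - 1)) ≤ t * |w j - 1| := by
      rw [← mul_neg]
      apply mul_le_mul_of_nonneg_left (neg_le_abs _) (le_of_lt ht.1)
    linarith
  have hg1zero : g1 = 0 := by
    apply Polynomial.eq_zero_of_infinite_isRoot
    apply Set.Infinite.mono (s := Set.Ioo 0 δ)
    · intro t ht; exact hroots t ht
    · exact Set.infinite_coe_iff.mp (Set.Ioo.infinite hδpos)
  have := hev 1
  rw [hg1zero] at this
  simp only [Polynomial.eval_zero] at this
  have hw : (fun j => 1 + 1 * (w j - 1)) = w := by funext j; ring
  rw [hw] at this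
  exact this.symm

end Aux

namespace Aux

variable {n : ℕ}

lemma totalDegree_pos_ne_zero {σ : MvPolynomial (Fin n) ℝ} (h : 0 < σ.totalDegree) : σ ≠ 0 := by
  intro hz; rw [hz] at h; simp at h

lemma deg_le_orthant (σ Q : MvPolynomial (Fin n) ℝ) (D : ℕ) (hD : 1 ≤ D)
    (hσ : ∀ x, 0 ≤ MvPolynomial.eval x σ)
    (hcmp : ∀ x : Fin n → ℝ, (∀ j, 0 < x j) →
      MvPolynomial.eval x σ ≤ MvPolynomial.eval x Q)
    (hQD : Q.totalDegree ≤ D) : σ.totalDegree ≤ D := by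
  by_contra hgt
  push_neg at hgt
  set d := σ.totalDegree with hd
  have hσne : σ ≠ 0 := totalDegree_pos_ne_zero (by omega)
  have htop := top_ne_zero hσne
  refine htop (vanish_pos _ fun u hu => ?_)
  set A := linepoly σ u (d + 1) with hA
  set B := linepoly Q u (d + 1) with hB
  have hBQ : Q.totalDegree < d + 1 := by omega
  have h1 : (A - B).coeff d ≤ 0 := by
    refine onevar (A - B) (fun s hs => ?_) d (by omega) (fun e he => ?_)
    · rw [Polynomial.eval_sub, linepoly_eval σ u _ (by omega) s, linepoly_eval Q u _ hBQ s,
        sub_nonpos]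
      exact hcmp (s • u) fun j => by
        simpa [Pi.smul_apply, smul_eq_mul] using mul_pos hs (hu j)
    · rw [Polynomial.coeff_sub, linepoly_coeff_zero σ u _ _ (by omega),
        linepoly_coeff_zero Q u _ _ (by omega), sub_zero]
  have h2 : (-A).coeff d ≤ 0 := by
    refine onevar (-A) (fun s hs => ?_) d (by omega) (fun e he => ?_)
    · rw [Polynomial.eval_neg, linepoly_eval σ u _ (by omega) s, neg_nonpos]
      exact hσ _
    · rw [Polynomial.coeff_neg, linepoly_coeff_zero σ u _ _ (by omega), neg_zero]
  rw [Polynomial.coeff_sub, linepoly_coeff σ u _ _ (by omega),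
    linepoly_coeff Q u _ _ (by omega),
    MvPolynomial.homogeneousComponent_eq_zero _ Q (by omega)] at h1
  rw [Polynomial.coeff_neg, linepoly_coeff σ u _ _ (by omega)] at h2
  simp only [map_zero, sub_zero] at h1
  rw [neg_nonpos] at h2
  linarith

lemma deg_le_orthant_mul (σ Q : MvPolynomial (Fin n) ℝ) (j₀ : Fin n) (D : ℕ) (hD : 1 ≤ D)
    (hσ : ∀ x, 0 ≤ MvPolynomial.eval x σ)
    (hcmp : ∀ x : Fin n → ℝ, (∀ j, 0 < x j) →
      x j₀ * MvPolynomial.eval x σ ≤ MvPolynomial.eval x Q)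
    (hQD : Q.totalDegree ≤ D) : σ.totalDegree ≤ D - 1 := by
  by_contra hgt
  push_neg at hgt
  set d := σ.totalDegree with hd
  have hdD : D ≤ d := by omega
  have hσne : σ ≠ 0 := totalDegree_pos_ne_zero (by omega)
  have htop := top_ne_zero hσne
  refine htop (vanish_pos _ fun u hu => ?_)
  set A := linepoly σ u (d + 1) with hA
  set B := linepoly Q u (d + 2) with hB
  set P := Polynomial.C (u j₀) * (Polynomial.X * A) - B with hP
  have h1 : P.coeff (d + 1) ≤ 0 := by
    refine onevar P (fun s hs => ?_) (d + 1) (by omega) (fun e he => ?_)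
    · rw [hP, Polynomial.eval_sub, Polynomial.eval_mul, Polynomial.eval_mul,
        Polynomial.eval_C, Polynomial.eval_X,
        linepoly_eval σ u _ (by omega) s, linepoly_eval Q u _ (by omega) s, sub_nonpos]
      have := hcmp (s • u) fun j => by
        simpa [Pi.smul_apply, smul_eq_mul] using mul_pos hs (hu j)
      calc u j₀ * (s * MvPolynomial.eval (s • u) σ)
          = (s • u) j₀ * MvPolynomial.eval (s • u) σ := by
            simp [Pi.smul_apply, smul_eq_mul]; ring
        _ ≤ _ := this
    · obtain ⟨e', rfl⟩ : ∃ e', e = e' + 1 := ⟨e - 1, by omega⟩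
      rw [hP, Polynomial.coeff_sub, Polynomial.coeff_C_mul, Polynomial.coeff_X_mul,
        linepoly_coeff_zero σ u _ _ (by omega), linepoly_coeff_zero Q u _ _ (by omega),
        mul_zero, sub_zero]
  have h2 : (-A).coeff d ≤ 0 := by
    refine onevar (-A) (fun s hs => ?_) d (by omega) (fun e he => ?_)
    · rw [Polynomial.eval_neg, linepoly_eval σ u _ (by omega) s, neg_nonpos]
      exact hσ _
    · rw [Polynomial.coeff_neg, linepoly_coeff_zero σ u _ _ (by omega), neg_zero]
  rw [hP, Polynomial.coeff_sub, Polynomial.coeff_C_mul, Polynomial.coeff_X_mul,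
    linepoly_coeff σ u _ _ (by omega), linepoly_coeff Q u _ _ (by omega),
    MvPolynomial.homogeneousComponent_eq_zero _ Q (by omega)] at h1
  rw [Polynomial.coeff_neg, linepoly_coeff σ u _ _ (by omega)] at h2
  simp only [map_zero, sub_zero] at h1
  rw [neg_nonpos] at h2
  nlinarith [hu j₀]

lemma even_totalDegree_of_nonneg (σ : MvPolynomial (Fin n) ℝ)
    (hσ : ∀ x, 0 ≤ MvPolynomial.eval x σ) : ¬ Odd σ.totalDegree := by
  intro hodd
  set d := σ.totalDegree with hd
  have hdpos : 0 < d := by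
    rcases Nat.eq_zero_or_pos d with h | h
    · rw [h] at hodd; exact absurd hodd (by simp)
    · exact h
  have hσne : σ ≠ 0 := totalDegree_pos_ne_zero hdpos
  have htop := top_ne_zero hσne
  have hkey : ∀ u : Fin n → ℝ,
      0 ≤ MvPolynomial.eval u (MvPolynomial.homogeneousComponent d σ) := by
    intro u
    have h2 : (-(linepoly σ u (d + 1))).coeff d ≤ 0 := by
      refine onevar _ (fun s hs => ?_) d hdpos (fun e he => ?_)
      · rw [Polynomial.eval_neg, linepoly_eval σ u _ (by omega) s, neg_nonpos]
        exact hσ _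
      · rw [Polynomial.coeff_neg, linepoly_coeff_zero σ u _ _ (by omega), neg_zero]
    rw [Polynomial.coeff_neg, linepoly_coeff σ u _ _ (by omega), neg_nonpos] at h2
    exact h2
  refine htop (vanish_pos _ fun u _ => ?_)
  have hpos := hkey u
  have hneg := hkey (-u)
  have : MvPolynomial.eval (-u) (MvPolynomial.homogeneousComponent d σ) =
      -(MvPolynomial.eval u (MvPolynomial.homogeneousComponent d σ)) := by
    have := eval_smul_homogeneous (MvPolynomial.homogeneousComponent_isHomogeneous d σ) u (-1)
    rw [neg_smul, one_smul] at this
    rw [this, Odd.neg_one_pow hodd, neg_one_mul]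
  rw [this] at hneg
  linarith

end Aux

namespace Aux

variable {n : ℕ}

lemma sos_integral (μ : ℝ → ℝ) (hμc : Continuous μ) (hμ : ∀ t ∈ Set.Icc (0:ℝ) 1, 0 ≤ μ t)
    (W : Polynomial (MvPolynomial (Fin n) ℝ)) :
    ∃ σ : MvPolynomial (Fin n) ℝ, IsSOS σ ∧ ∀ x : Fin n → ℝ,
      MvPolynomial.eval x σ =
        ∫ t in (0:ℝ)..1, μ t * (Polynomial.eval t (W.map (MvPolynomial.eval x)))^2 := by
  classical
  set N := W.natDegree + 1 with hN
  set M : Matrix (Fin N) (Fin N) ℝ :=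
    Matrix.of (fun a b => ∫ t in (0:ℝ)..1, μ t * t ^ ((a:ℕ) + (b:ℕ))) with hM
  have hint : ∀ (c : ℝ) (e : ℕ),
      IntervalIntegrable (fun t => c * (μ t * t ^ e)) MeasureTheory.volume 0 1 :=
    fun c e => (continuous_const.mul (hμc.mul (continuous_pow e))).intervalIntegrable _ _
  have point : ∀ (w : Fin N → ℝ) (t : ℝ),
      μ t * (∑ a, w a * t ^ (a:ℕ))^2 =
        ∑ a, ∑ b, (w a * w b) * (μ t * t ^ ((a:ℕ) + (b:ℕ))) := by
    intro w t
    rw [sq, Finset.sum_mul_sum, Finset.mul_sum]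
    refine Finset.sum_congr rfl fun a _ => ?_
    rw [Finset.mul_sum]
    refine Finset.sum_congr rfl fun b _ => ?_
    rw [pow_add]; ring
  have quad : ∀ w : Fin N → ℝ,
      ∑ a, ∑ b, (w a * w b) * M a b =
        ∫ t in (0:ℝ)..1, μ t * (∑ a, w a * t ^ (a:ℕ))^2 := by
    intro w
    have step1 : ∀ a b : Fin N, (w a * w b) * M a b =
        ∫ t in (0:ℝ)..1, (w a * w b) * (μ t * t ^ ((a:ℕ) + (b:ℕ))) := by
      intro a b
      rw [intervalIntegral.integral_const_mul]
      rfl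
    have step2 : ∀ a : Fin N,
        (∑ b, ∫ t in (0:ℝ)..1, (w a * w b) * (μ t * t ^ ((a:ℕ) + (b:ℕ)))) =
          ∫ t in (0:ℝ)..1, ∑ b, (w a * w b) * (μ t * t ^ ((a:ℕ) + (b:ℕ))) :=
      fun a => (intervalIntegral.integral_finset_sum (fun b _ => hint _ _)).symm
    simp_rw [step1, step2]
    rw [← intervalIntegral.integral_finset_sum]
    · simp_rw [point]
    · intro a _
      exact (continuous_finset_sum _ fun b _ =>
        continuous_const.mul (hμc.mul (continuous_pow _))).intervalIntegrable _ _
  have hPSD : M.PosSemidef := by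
    refine Matrix.PosSemidef.of_dotProduct_mulVec_nonneg ?_ ?_
    · have hsym : Mᴴ = M := by
        ext a b
        rw [Matrix.conjTranspose_apply, star_trivial]
        show (∫ t in (0:ℝ)..1, μ t * t ^ ((b:ℕ) + (a:ℕ))) =
          ∫ t in (0:ℝ)..1, μ t * t ^ ((a:ℕ) + (b:ℕ))
        rw [add_comm (b:ℕ) (a:ℕ)]
      exact hsym
    · intro w
      have hdot : dotProduct (star w) (M.mulVec w) = ∑ a, ∑ b, (w a * w b) * M a b := by
        simp only [dotProduct, Matrix.mulVec, star_trivial, Pi.star_apply]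
        refine Finset.sum_congr rfl fun a _ => ?_
        rw [Finset.mul_sum]
        apply Finset.sum_congr rfl
        intro b _
        ring
      rw [hdot, quad]
      apply intervalIntegral.integral_nonneg (by norm_num)
      intro t ht
      exact mul_nonneg (hμ t ht) (sq_nonneg _)
  obtain ⟨m', B, hB⟩ := Matrix.posSemidef_iff_eq_sum_vecMulVec.mp hPSD
  have hMab : ∀ a b, M a b = ∑ r, B r a * B r b := by
    intro a b
    rw [hB, Matrix.sum_apply]
    refine Finset.sum_congr rfl fun r _ => ?_
    simp [Matrix.vecMulVec_apply]
  refine ⟨∑ r : Fin m', (∑ a : Fin N, B r a • W.coeff (a:ℕ))^2, isSOS_sum_sq _ _, ?_⟩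
  intro x
  set w : Fin N → ℝ := fun a => MvPolynomial.eval x (W.coeff (a:ℕ)) with hw
  have heval : MvPolynomial.eval x (∑ r : Fin m', (∑ a : Fin N, B r a • W.coeff (a:ℕ))^2) =
      ∑ r, (∑ a, B r a * w a)^2 := by
    rw [map_sum]
    refine Finset.sum_congr rfl fun r _ => ?_
    rw [map_pow, map_sum]
    congr 1
    exact Finset.sum_congr rfl fun a _ => MvPolynomial.smul_eval _ _ _
  have hexp : ∑ r, (∑ a, B r a * w a)^2 = ∑ a, ∑ b, (w a * w b) * M a b := by
    have : ∀ r : Fin m', (∑ a, B r a * w a)^2 =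
        ∑ a, ∑ b, (B r a * w a) * (B r b * w b) := by
      intro r; rw [sq, Finset.sum_mul_sum]
    simp_rw [this, hMab]
    rw [Finset.sum_comm]
    refine Finset.sum_congr rfl fun a _ => ?_
    rw [Finset.sum_comm]
    refine Finset.sum_congr rfl fun b _ => ?_
    rw [Finset.mul_sum]
    apply Finset.sum_congr rfl
    intro r _
    ring
  have hWev : ∀ t : ℝ, Polynomial.eval t (W.map (MvPolynomial.eval x)) =
      ∑ a : Fin N, w a * t ^ (a:ℕ) := by
    intro t
    rw [Polynomial.eval_eq_sum_range' (n := N)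
      (lt_of_le_of_lt Polynomial.natDegree_map_le (Nat.lt_succ_self _)) t]
    rw [← Fin.sum_univ_eq_sum_range (fun a => (W.map (MvPolynomial.eval x)).coeff a * t ^ a) N]
    exact Finset.sum_congr rfl fun a _ => by rw [Polynomial.coeff_map]
  rw [heval, hexp, quad w]
  simp_rw [hWev]

end Aux

namespace Aux

variable {n : ℕ}

lemma sum_rot {A B C : Type*} [Fintype A] [Fintype B] [Fintype C] (f : A → B → C → ℝ) :
    ∑ j : A, ∑ i : B, ∑ c : C, f j i c = ∑ c : C, ∑ j : A, ∑ i : B, f j i c := by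
  have h1 : ∀ j : A, ∑ i : B, ∑ c : C, f j i c = ∑ c : C, ∑ i : B, f j i c :=
    fun j => Finset.sum_comm
  simp_rw [h1]
  exact Finset.sum_comm

lemma quadsq {r' : ℕ} (v : Fin n → ℝ) (M : Fin n → Fin r' → ℝ) :
    ∑ j, v j * ∑ i, v i * (∑ c, M i c * M j c) = ∑ c, (∑ j, v j * M j c)^2 := by
  simp_rw [sq, Finset.sum_mul_sum, Finset.mul_sum]
  rw [sum_rot]
  exact Finset.sum_congr rfl fun c _ => Finset.sum_congr rfl fun j _ =>
    Finset.sum_congr rfl fun i _ => by ring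

lemma quadsq_w {r' : ℕ} (v : Fin n → ℝ) (M : Fin n → Fin r' → ℝ) (c₀ : ℝ) :
    ∑ j, v j * ∑ i, v i * (c₀ * ∑ c, M i c * M j c) = c₀ * ∑ c, (∑ j, v j * M j c)^2 := by
  simp_rw [sq, Finset.sum_mul_sum, Finset.mul_sum]
  rw [sum_rot]
  exact Finset.sum_congr rfl fun c _ => Finset.sum_congr rfl fun j _ =>
    Finset.sum_congr rfl fun i _ => by ring

end Aux

namespace Aux

variable {n : ℕ}

lemma sum_rot4 {A B C D : Type*} [Fintype A] [Fintype B] [Fintype C] [Fintype D]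
    (f : A → B → C → D → ℝ) :
    ∑ j : A, ∑ i : B, ∑ l : C, ∑ c : D, f j i l c =
      ∑ l : C, ∑ c : D, ∑ j : A, ∑ i : B, f j i l c := by
  have h1 : ∀ j : A, ∑ i : B, ∑ l : C, ∑ c : D, f j i l c =
      ∑ l : C, ∑ i : B, ∑ c : D, f j i l c := fun j => Finset.sum_comm
  simp_rw [h1]
  rw [Finset.sum_comm]
  refine Finset.sum_congr rfl fun l _ => ?_
  have h2 : ∀ j : A, ∑ i : B, ∑ c : D, f j i l c = ∑ c : D, ∑ i : B, f j i l c :=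
    fun j => Finset.sum_comm
  simp_rw [h2]
  exact Finset.sum_comm

lemma quadfull {r' : ℕ} (v zz : Fin n → ℝ) (M0 : Fin n → Fin r' → ℝ)
    (M1 : Fin n → Fin n → Fin r' → ℝ) :
    ∑ j, v j * ∑ i, v i * ((∑ c, M0 i c * M0 j c) +
        ∑ l, zz l * ∑ c, M1 l i c * M1 l j c)
      = (∑ c, (∑ j, v j * M0 j c)^2) + ∑ l, zz l * ∑ c, (∑ j, v j * M1 l j c)^2 := by
  have hsplit : ∀ j, v j * ∑ i, v i * ((∑ c, M0 i c * M0 j c) +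
      ∑ l, zz l * ∑ c, M1 l i c * M1 l j c)
      = v j * ∑ i, v i * (∑ c, M0 i c * M0 j c)
        + v j * ∑ i, v i * (∑ l, zz l * ∑ c, M1 l i c * M1 l j c) := by
    intro j
    rw [← mul_add, ← Finset.sum_add_distrib]
    congr 1
    exact Finset.sum_congr rfl fun i _ => by rw [← mul_add]
  simp_rw [hsplit]
  rw [Finset.sum_add_distrib, quadsq v M0]
  congr 1
  simp_rw [sq, Finset.sum_mul_sum, Finset.mul_sum]
  rw [sum_rot4]
  exact Finset.sum_congr rfl fun l _ => Finset.sum_congr rfl fun c _ =>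
    Finset.sum_congr rfl fun j _ => Finset.sum_congr rfl fun i _ => by ring

set_option maxHeartbeats 2000000 in
lemma cert0 (p : MvPolynomial (Fin n) ℝ) (hcvx : CopSOSConvex p)
    (a : Fin n → ℝ) (ha : ∀ j, 0 ≤ a j) :
    ∃ (σ0 : MvPolynomial (Fin n) ℝ) (σ : Fin n → MvPolynomial (Fin n) ℝ),
      IsSOS σ0 ∧ (∀ l, IsSOS (σ l)) ∧
      p = MvPolynomial.C (MvPolynomial.eval a p) +
        (∑ j, MvPolynomial.eval a (MvPolynomial.pderiv j p) •
            (MvPolynomial.X j - MvPolynomial.C (a j))) +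
          σ0 + ∑ l, MvPolynomial.X l * σ l := by
  classical
  obtain ⟨r, P0, P, hP⟩ := hcvx
  have hent : ∀ (w : Fin n → ℝ) (i j : Fin n),
      MvPolynomial.eval w (MvPolynomial.pderiv i (MvPolynomial.pderiv j p)) =
        (∑ c, MvPolynomial.eval w (P0 i c) * MvPolynomial.eval w (P0 j c)) +
          ∑ l, w l * ∑ c, MvPolynomial.eval w (P l i c) * MvPolynomial.eval w (P l j c) := by
    intro w i j
    rw [hP w i j]
    simp [Matrix.add_apply, Matrix.sum_apply, Matrix.smul_apply, Matrix.mul_apply,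
      Matrix.transpose_apply, Matrix.map_apply, smul_eq_mul, Finset.mul_sum]
  set V : Fin n → MvPolynomial (Fin n) ℝ :=
    fun j => MvPolynomial.X j - MvPolynomial.C (a j) with hV
  set L := lineMap a with hL
  set W0 : Fin r → Polynomial (MvPolynomial (Fin n) ℝ) :=
    fun c => ∑ j, Polynomial.C (V j) * L (P0 j c) with hW0
  set W1 : Fin n → Fin r → Polynomial (MvPolynomial (Fin n) ℝ) :=
    fun l c => ∑ j, Polynomial.C (V j) * L (P l j c) with hW1
  have hc0 : Continuous (fun t : ℝ => 1 - t) := continuous_const.sub continuous_id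
  have hn0 : ∀ t ∈ Set.Icc (0:ℝ) 1, (0:ℝ) ≤ 1 - t := fun t ht => by linarith [ht.2]
  have hc1 : Continuous (fun t : ℝ => (1 - t)^2) := by continuity
  have hn1 : ∀ t ∈ Set.Icc (0:ℝ) 1, (0:ℝ) ≤ (1 - t)^2 := fun t _ => sq_nonneg _
  have hc2 : Continuous (fun t : ℝ => t * (1 - t)) := by continuity
  have hn2 : ∀ t ∈ Set.Icc (0:ℝ) 1, (0:ℝ) ≤ t * (1 - t) := fun t ht =>
    mul_nonneg ht.1 (by linarith [ht.2])
  choose A hAsos hAev using fun c => sos_integral (fun t => 1 - t) hc0 hn0 (W0 c)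
  choose A1 hA1sos hA1ev using fun l c => sos_integral (fun t => (1 - t)^2) hc1 hn1 (W1 l c)
  choose A2 hA2sos hA2ev using fun l c => sos_integral (fun t => t * (1 - t)) hc2 hn2 (W1 l c)
  refine ⟨(∑ c, A c) + ∑ l, a l • (∑ c, A1 l c), fun l => ∑ c, A2 l c, ?_, ?_, ?_⟩
  · exact IsSOS.add (isSOS_sum _ _ fun c _ => hAsos c)
      (isSOS_sum _ _ fun l _ => IsSOS.smul (ha l) (isSOS_sum _ _ fun c _ => hA1sos l c))
  · exact fun l => isSOS_sum _ _ fun c _ => hA2sos l c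
  apply MvPolynomial.funext
  intro x
  set z : ℝ → Fin n → ℝ := fun t j => a j + t * (x j - a j) with hz
  set g : Polynomial ℝ := Polynomial.map (MvPolynomial.eval x) (L p) with hg
  set DDg := Polynomial.derivative (Polynomial.derivative g) with hDDg
  have hEL : ∀ (t : ℝ) (q : MvPolynomial (Fin n) ℝ),
      Polynomial.eval t (Polynomial.map (MvPolynomial.eval x) (L q)) =
        MvPolynomial.eval (z t) q := fun t q => eval_lineMap a x t q
  have hVx : ∀ j, MvPolynomial.eval x (V j) = x j - a j := by
    intro j; simp [hV]
  have hDD : DDg = Polynomial.map (MvPolynomial.eval x)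
      (∑ j, Polynomial.C (V j) * ∑ i, Polynomial.C (V i) *
        L (MvPolynomial.pderiv i (MvPolynomial.pderiv j p))) := by
    rw [hDDg, hg, Polynomial.derivative_map, Polynomial.derivative_map]
    congr 1
    rw [derivative_lineMap a p, map_sum]
    refine Finset.sum_congr rfl fun j _ => ?_
    rw [Polynomial.derivative_mul, Polynomial.derivative_C, zero_mul, zero_add,
      derivative_lineMap a]
  have hg2 : ∀ t : ℝ, Polynomial.eval t DDg =
      ∑ j, (x j - a j) * ∑ i, (x i - a i) *
        MvPolynomial.eval (z t) (MvPolynomial.pderiv i (MvPolynomial.pderiv j p)) := by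
    intro t
    rw [hDD, Polynomial.map_sum, Polynomial.eval_finset_sum]
    refine Finset.sum_congr rfl fun j _ => ?_
    rw [Polynomial.map_mul, Polynomial.eval_mul, Polynomial.map_C, Polynomial.eval_C, hVx,
      Polynomial.map_sum, Polynomial.eval_finset_sum]
    congr 1
    refine Finset.sum_congr rfl fun i _ => ?_
    rw [Polynomial.map_mul, Polynomial.eval_mul, Polynomial.map_C, Polynomial.eval_C, hVx,
      hEL]
  set ω0 : Fin r → ℝ → ℝ :=
    fun c t => Polynomial.eval t (Polynomial.map (MvPolynomial.eval x) (W0 c)) with hω0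
  set ω1 : Fin n → Fin r → ℝ → ℝ :=
    fun l c t => Polynomial.eval t (Polynomial.map (MvPolynomial.eval x) (W1 l c)) with hω1
  have hω0e : ∀ c t, ω0 c t = ∑ j, (x j - a j) * MvPolynomial.eval (z t) (P0 j c) := by
    intro c t
    rw [hω0]
    simp only [hW0]
    rw [Polynomial.map_sum, Polynomial.eval_finset_sum]
    refine Finset.sum_congr rfl fun j _ => ?_
    rw [Polynomial.map_mul, Polynomial.eval_mul, Polynomial.map_C, Polynomial.eval_C, hVx,
      hEL]
  have hω1e : ∀ l c t, ω1 l c t = ∑ j, (x j - a j) * MvPolynomial.eval (z t) (P l j c) := by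
    intro l c t
    rw [hω1]
    simp only [hW1]
    rw [Polynomial.map_sum, Polynomial.eval_finset_sum]
    refine Finset.sum_congr rfl fun j _ => ?_
    rw [Polynomial.map_mul, Polynomial.eval_mul, Polynomial.map_C, Polynomial.eval_C, hVx,
      hEL]
  have hquad : ∀ t : ℝ, Polynomial.eval t DDg =
      (∑ c, (ω0 c t)^2) + ∑ l, z t l * ∑ c, (ω1 l c t)^2 := by
    intro t
    rw [hg2 t]
    simp_rw [hent (z t)]
    rw [quadfull (fun j => x j - a j) (fun l => z t l)
      (fun j c => MvPolynomial.eval (z t) (P0 j c))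
      (fun l j c => MvPolynomial.eval (z t) (P l j c))]
    simp_rw [hω0e, hω1e]
  have hFTC : ∫ t in (0:ℝ)..1, (1 - t) * Polynomial.eval t DDg =
      Polynomial.eval 1 g - Polynomial.eval 0 g -
        Polynomial.eval 0 (Polynomial.derivative g) := by
    have hderiv : ∀ t ∈ Set.uIcc (0:ℝ) 1,
        HasDerivAt (fun s => Polynomial.eval s g +
          (1 - s) * Polynomial.eval s (Polynomial.derivative g))
          ((1 - t) * Polynomial.eval t DDg) t := by
      intro t _
      have h1 := g.hasDerivAt t
      have h2 := (Polynomial.derivative g).hasDerivAt t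
      have h3 : HasDerivAt (fun s : ℝ => 1 - s) (-1) t := by
        simpa using (hasDerivAt_id' t).const_sub (1:ℝ)
      have h6 := h1.add (h3.mul h2)
      have h7 : (1 - t) * Polynomial.eval t DDg =
          Polynomial.eval t (Polynomial.derivative g) +
            (-1 * Polynomial.eval t (Polynomial.derivative g) +
              (1 - t) * Polynomial.eval t
                (Polynomial.derivative (Polynomial.derivative g))) := by
        rw [hDDg]; ring
      rw [h7]
      exact h6
    have hci : IntervalIntegrable (fun t => (1 - t) * Polynomial.eval t DDg)
        MeasureTheory.volume 0 1 :=
      ((continuous_const.sub continuous_id).mul DDg.continuous).intervalIntegrable _ _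
    rw [intervalIntegral.integral_eq_sub_of_hasDerivAt hderiv hci]
    ring
  have hg1 : Polynomial.eval 1 g = MvPolynomial.eval x p := by
    have hz1 : z 1 = x := funext fun j => by show a j + 1 * (x j - a j) = x j; ring
    rw [hg, hEL, hz1]
  have hg0 : Polynomial.eval 0 g = MvPolynomial.eval a p := by
    have hz0 : z 0 = a := funext fun j => by show a j + 0 * (x j - a j) = a j; ring
    rw [hg, hEL, hz0]
  have hg0' : Polynomial.eval 0 (Polynomial.derivative g) =
      ∑ j, MvPolynomial.eval a (MvPolynomial.pderiv j p) * (x j - a j) := by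
    rw [hg, Polynomial.derivative_map, derivative_lineMap a p, Polynomial.map_sum,
      Polynomial.eval_finset_sum]
    refine Finset.sum_congr rfl fun j _ => ?_
    rw [Polynomial.map_mul, Polynomial.eval_mul, Polynomial.map_C, Polynomial.eval_C, hVx,
      hEL]
    have hz0 : z 0 = a := by funext j; show a j + 0 * (x j - a j) = a j; ring
    rw [hz0, mul_comm]
  have hpoint : ∀ t : ℝ, (1 - t) * Polynomial.eval t DDg =
      (∑ c, (1 - t) * (ω0 c t)^2) +
        ((∑ l, ∑ c, a l * ((1 - t)^2 * (ω1 l c t)^2)) +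
          ∑ l, ∑ c, x l * ((t * (1 - t)) * (ω1 l c t)^2)) := by
    intro t
    rw [hquad t, mul_add, Finset.mul_sum, Finset.mul_sum, ← Finset.sum_add_distrib]
    congr 1
    refine Finset.sum_congr rfl fun l _ => ?_
    have hzl : (1 - t) * z t l = a l * (1 - t)^2 + x l * (t * (1 - t)) := by
      show (1 - t) * (a l + t * (x l - a l)) = _
      ring
    calc (1 - t) * (z t l * ∑ c, (ω1 l c t)^2)
        = ((1 - t) * z t l) * ∑ c, (ω1 l c t)^2 := by ring
      _ = (a l * (1 - t)^2 + x l * (t * (1 - t))) * ∑ c, (ω1 l c t)^2 := by rw [hzl]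
      _ = _ := by
          rw [add_mul, Finset.mul_sum, Finset.mul_sum]
          congr 1
          · exact Finset.sum_congr rfl fun c _ => by ring
          · exact Finset.sum_congr rfl fun c _ => by ring
  have hcω0 : ∀ c, Continuous (ω0 c) := fun c => Polynomial.continuous _
  have hcω1 : ∀ l c, Continuous (ω1 l c) := fun l c => Polynomial.continuous _
  have int0 : ∀ c, IntervalIntegrable (fun t => (1 - t) * (ω0 c t)^2)
      MeasureTheory.volume 0 1 := fun c =>
    (hc0.mul ((hcω0 c).pow 2)).intervalIntegrable _ _
  have int1 : ∀ l c, IntervalIntegrable (fun t => a l * ((1 - t)^2 * (ω1 l c t)^2))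
      MeasureTheory.volume 0 1 := fun l c =>
    (continuous_const.mul (hc1.mul ((hcω1 l c).pow 2))).intervalIntegrable _ _
  have int2 : ∀ l c, IntervalIntegrable (fun t => x l * ((t * (1 - t)) * (ω1 l c t)^2))
      MeasureTheory.volume 0 1 := fun l c =>
    (continuous_const.mul (hc2.mul ((hcω1 l c).pow 2))).intervalIntegrable _ _
  have intF : IntervalIntegrable (fun t => ∑ c, (1 - t) * (ω0 c t)^2)
      MeasureTheory.volume 0 1 :=
    (continuous_finset_sum _ fun c _ => hc0.mul ((hcω0 c).pow 2)).intervalIntegrable _ _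
  have intG : IntervalIntegrable (fun t => ∑ l, ∑ c, a l * ((1 - t)^2 * (ω1 l c t)^2))
      MeasureTheory.volume 0 1 :=
    (continuous_finset_sum _ fun l _ => continuous_finset_sum _ fun c _ =>
      continuous_const.mul (hc1.mul ((hcω1 l c).pow 2))).intervalIntegrable _ _
  have intH : IntervalIntegrable (fun t => ∑ l, ∑ c, x l * ((t * (1 - t)) * (ω1 l c t)^2))
      MeasureTheory.volume 0 1 :=
    (continuous_finset_sum _ fun l _ => continuous_finset_sum _ fun c _ =>
      continuous_const.mul (hc2.mul ((hcω1 l c).pow 2))).intervalIntegrable _ _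
  have hI : ∫ t in (0:ℝ)..1, (1 - t) * Polynomial.eval t DDg =
      (∑ c, MvPolynomial.eval x (A c)) +
        ((∑ l, ∑ c, a l * MvPolynomial.eval x (A1 l c)) +
          ∑ l, ∑ c, x l * MvPolynomial.eval x (A2 l c)) := by
    rw [intervalIntegral.integral_congr (g := fun t =>
      (∑ c, (1 - t) * (ω0 c t)^2) +
        ((∑ l, ∑ c, a l * ((1 - t)^2 * (ω1 l c t)^2)) +
          ∑ l, ∑ c, x l * ((t * (1 - t)) * (ω1 l c t)^2))) (fun t _ => hpoint t)]
    rw [intervalIntegral.integral_add intF (intG.add intH),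
      intervalIntegral.integral_add intG intH]
    congr 1
    · rw [intervalIntegral.integral_finset_sum (fun c _ => int0 c)]
      exact Finset.sum_congr rfl fun c _ => (hAev c x).symm
    congr 1
    · rw [intervalIntegral.integral_finset_sum
        (f := fun l t => ∑ c, a l * ((1 - t)^2 * (ω1 l c t)^2)) (fun l _ =>
        (continuous_finset_sum _ fun c _ =>
          continuous_const.mul (hc1.mul ((hcω1 l c).pow 2))).intervalIntegrable _ _)]
      refine Finset.sum_congr rfl fun l _ => ?_
      rw [intervalIntegral.integral_finset_sum (fun c _ => int1 l c)]
      refine Finset.sum_congr rfl fun c _ => ?_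
      rw [intervalIntegral.integral_const_mul]
      rw [← hA1ev l c x]
    · rw [intervalIntegral.integral_finset_sum
        (f := fun l t => ∑ c, x l * ((t * (1 - t)) * (ω1 l c t)^2)) (fun l _ =>
        (continuous_finset_sum _ fun c _ =>
          continuous_const.mul (hc2.mul ((hcω1 l c).pow 2))).intervalIntegrable _ _)]
      refine Finset.sum_congr rfl fun l _ => ?_
      rw [intervalIntegral.integral_finset_sum (fun c _ => int2 l c)]
      refine Finset.sum_congr rfl fun c _ => ?_
      rw [intervalIntegral.integral_const_mul]
      rw [← hA2ev l c x]
  have H1 : ∫ t in (0:ℝ)..1, (1 - t) * Polynomial.eval t DDg =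
      MvPolynomial.eval x p - MvPolynomial.eval a p -
        ∑ j, MvPolynomial.eval a (MvPolynomial.pderiv j p) * (x j - a j) := by
    rw [hFTC, hg1, hg0, hg0']
  simp only [map_add, map_sum, MvPolynomial.smul_eval, map_sub, MvPolynomial.eval_X,
    MvPolynomial.eval_C, _root_.map_mul]
  simp_rw [Finset.mul_sum]
  linarith [hI, H1]

end Aux

namespace Aux

variable {n : ℕ}

lemma isSOS_zmap {Δ : Finset (Fin n)} {σ : MvPolynomial (Fin n) ℝ} (h : IsSOS σ) :
    IsSOS (zmap Δ σ) :=
  IsSOS.map (zmap Δ : MvPolynomial (Fin n) ℝ →ₐ[ℝ] MvPolynomial (Fin n) ℝ).toRingHom h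

lemma const_case (p : MvPolynomial (Fin n) ℝ) (h : p.totalDegree = 0)
    (y : (Fin n →₀ ℕ) → ℝ) (hy0 : y 0 = 1) (x : Fin n → ℝ) :
    MvPolynomial.eval x p = riesz p y := by
  have hsupp : p.support ⊆ {0} := by
    intro α hα
    have h1 : (α.sum fun _ e => e) ≤ p.totalDegree := MvPolynomial.le_totalDegree hα
    rw [h, Nat.le_zero] at h1
    have : α = 0 := by
      ext i
      by_contra hi
      have hi' : i ∈ α.support := Finsupp.mem_support_iff.mpr hi
      have := Finset.sum_eq_zero_iff.mp h1 i hi'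
      exact hi this
    simp [this]
  rw [riesz_eq_sum p y {0} hsupp, MvPolynomial.eval_eq,
    Finset.sum_subset hsupp (fun α _ hn => by
      rw [MvPolynomial.notMem_support_iff.mp hn, zero_mul])]
  simp [hy0]

lemma jensen (k : ℕ) (hk : 1 ≤ k) (Δ : Finset (Fin n)) (p : MvPolynomial (Fin n) ℝ)
    (hsupp : p ∈ MvPolynomial.supported ℝ (Δ : Set (Fin n))) (hdeg : p.totalDegree ≤ 2 * k)
    (hcvx : CopSOSConvex p) (y : (Fin n →₀ ℕ) → ℝ) (hy0 : y 0 = 1)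
    (hMom : ∀ σ : MvPolynomial (Fin n) ℝ, IsSOS σ →
      σ ∈ MvPolynomial.supported ℝ (Δ : Set (Fin n)) → σ.totalDegree ≤ 2 * k →
      0 ≤ riesz σ y)
    (hLoc : ∀ j ∈ Δ, ∀ σ : MvPolynomial (Fin n) ℝ, IsSOS σ →
      σ ∈ MvPolynomial.supported ℝ (Δ : Set (Fin n)) → σ.totalDegree ≤ 2 * k - 2 →
      0 ≤ riesz (MvPolynomial.X j * σ) y) :
    MvPolynomial.eval (fun j => if j ∈ Δ then y (Finsupp.single j 1) else 0) p ≤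
      riesz p y := by
  classical
  set a : Fin n → ℝ := fun j => if j ∈ Δ then y (Finsupp.single j 1) else 0 with haa
  have ha : ∀ j, 0 ≤ a j := by
    intro j
    by_cases h : j ∈ Δ
    · have h1 := hLoc j h 1 isSOS_one (one_mem _) (by simp)
      rw [mul_one, riesz_X] at h1
      simpa [haa, h] using h1
    · simp [haa, h]
  obtain ⟨σ0, σ, hσ0sos, hσsos, hq⟩ := cert0 p hcvx a ha
  set d : Fin n → ℝ := fun j => MvPolynomial.eval a (MvPolynomial.pderiv j p) with hd
  have hd0 : ∀ j, j ∉ Δ → d j = 0 := by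
    intro j hj; simp only [hd]; rw [pderiv_eq_zero_of_not_mem hsupp hj, map_zero]
  -- transfer through zmap
  set σ' : Fin n → MvPolynomial (Fin n) ℝ :=
    fun l => if l ∈ Δ then zmap Δ (σ l) else 0 with hσ'
  have hzmapC : ∀ c : ℝ, zmap Δ (MvPolynomial.C c) = MvPolynomial.C c := fun c => by
    simp [zmap, MvPolynomial.algebraMap_eq]
  have hzmapXin : ∀ j ∈ Δ, zmap Δ (MvPolynomial.X j) = MvPolynomial.X j := fun j h => by
    simp [zmap, h]
  have hzmapXout : ∀ j ∉ Δ, zmap Δ (MvPolynomial.X j) = 0 := fun j h => by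
    simp [zmap, h]
  have hlin : ∀ j, zmap Δ (d j • (MvPolynomial.X j - MvPolynomial.C (a j))) =
      d j • (MvPolynomial.X j - MvPolynomial.C (a j)) := by
    intro j
    by_cases h : j ∈ Δ
    · rw [_root_.map_smul, map_sub, hzmapXin j h, hzmapC]
    · rw [_root_.map_smul, hd0 j h, zero_smul, zero_smul]
  have hquadterm : ∀ l, zmap Δ (MvPolynomial.X l * σ l) = MvPolynomial.X l * σ' l := by
    intro l
    rw [_root_.map_mul]
    by_cases h : l ∈ Δ
    · rw [hzmapXin l h, hσ']
      simp only [if_pos h]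
    · rw [hzmapXout l h, zero_mul, hσ']
      simp only [if_neg h, mul_zero]
  have hfinal : p = MvPolynomial.C (MvPolynomial.eval a p) +
      (∑ j, d j • (MvPolynomial.X j - MvPolynomial.C (a j))) +
        zmap Δ σ0 + ∑ l, MvPolynomial.X l * σ' l := by
    have hqz := congrArg (zmap Δ) hq
    rw [zmap_fix hsupp, map_add, map_add, map_add, map_sum, map_sum, hzmapC,
      Finset.sum_congr rfl (fun j _ => hlin j),
      Finset.sum_congr rfl (fun l _ => hquadterm l)] at hqz
    exact hqz
  -- the tail polynomial
  have hσ'sos : ∀ l, IsSOS (σ' l) := by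
    intro l
    rw [hσ']
    by_cases h : l ∈ Δ
    · simp only [if_pos h]; exact isSOS_zmap (hσsos l)
    · simp only [if_neg h]; exact isSOS_zero
  have hσ'nn : ∀ l x, 0 ≤ MvPolynomial.eval x (σ' l) := fun l x =>
    IsSOS.eval_nonneg (hσ'sos l) x
  have hσ0nn : ∀ x, 0 ≤ MvPolynomial.eval x (zmap Δ σ0) := fun x =>
    IsSOS.eval_nonneg (isSOS_zmap hσ0sos) x
  set qt : MvPolynomial (Fin n) ℝ := p - MvPolynomial.C (MvPolynomial.eval a p) -
    ∑ j, d j • (MvPolynomial.X j - MvPolynomial.C (a j)) with hqt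
  have hevalp : ∀ x : Fin n → ℝ, MvPolynomial.eval x p =
      MvPolynomial.eval a p + (∑ j, d j * (x j - a j)) +
        MvPolynomial.eval x (zmap Δ σ0) + ∑ l, x l * MvPolynomial.eval x (σ' l) := by
    intro x
    conv_lhs => rw [hfinal]
    simp only [map_add, map_sum, MvPolynomial.smul_eval, map_sub, MvPolynomial.eval_X,
      MvPolynomial.eval_C, _root_.map_mul]
  have hqteq : ∀ x : Fin n → ℝ, MvPolynomial.eval x qt =
      MvPolynomial.eval x (zmap Δ σ0) + ∑ l, x l * MvPolynomial.eval x (σ' l) := by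
    intro x
    rw [hqt, map_sub, map_sub, hevalp x]
    simp only [map_sum, MvPolynomial.smul_eval, map_sub, MvPolynomial.eval_X,
      MvPolynomial.eval_C]
    ring
  have hqtdeg : qt.totalDegree ≤ 2 * k := by
    have h1 : (MvPolynomial.C (MvPolynomial.eval a p) : MvPolynomial (Fin n) ℝ).totalDegree
        = 0 := MvPolynomial.totalDegree_C _
    have h2 : (∑ j, d j • (MvPolynomial.X j - MvPolynomial.C (a j))).totalDegree ≤ 1 := by
      refine le_trans (MvPolynomial.totalDegree_finset_sum _ _) ?_
      refine Finset.sup_le fun j _ => ?_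
      refine le_trans (MvPolynomial.totalDegree_smul_le _ _) ?_
      rw [sub_eq_add_neg]
      refine le_trans (MvPolynomial.totalDegree_add _ _) ?_
      rw [MvPolynomial.totalDegree_neg]
      simp [MvPolynomial.totalDegree_X, MvPolynomial.totalDegree_C]
    have h3 : qt = p + (-(MvPolynomial.C (MvPolynomial.eval a p)) +
        -(∑ j, d j • (MvPolynomial.X j - MvPolynomial.C (a j)))) := by
      rw [hqt]; ring
    rw [h3]
    refine le_trans (MvPolynomial.totalDegree_add _ _) ?_
    refine max_le hdeg ?_
    refine le_trans (MvPolynomial.totalDegree_add _ _) ?_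
    rw [MvPolynomial.totalDegree_neg, MvPolynomial.totalDegree_neg, h1]
    refine max_le (by omega) (by omega)
  -- degree bounds
  have hσ0deg : (zmap Δ σ0).totalDegree ≤ 2 * k := by
    refine deg_le_orthant _ qt (2 * k) (by omega) hσ0nn (fun x hx => ?_) hqtdeg
    rw [hqteq x]
    have : 0 ≤ ∑ l, x l * MvPolynomial.eval x (σ' l) :=
      Finset.sum_nonneg fun l _ => mul_nonneg (le_of_lt (hx l)) (hσ'nn l x)
    linarith
  have hσ'deg : ∀ l, (σ' l).totalDegree ≤ 2 * k - 2 := by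
    intro l
    have hle : (σ' l).totalDegree ≤ 2 * k - 1 := by
      refine deg_le_orthant_mul _ qt l (2 * k) (by omega) (hσ'nn l) (fun x hx => ?_) hqtdeg
      rw [hqteq x]
      have h4 : ∀ m, 0 ≤ x m * MvPolynomial.eval x (σ' m) := fun m =>
        mul_nonneg (le_of_lt (hx m)) (hσ'nn m x)
      have h5 : x l * MvPolynomial.eval x (σ' l) ≤
          ∑ m, x m * MvPolynomial.eval x (σ' m) :=
        Finset.single_le_sum (f := fun m => x m * MvPolynomial.eval x (σ' m))
          (fun m _ => h4 m) (Finset.mem_univ l)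
      have h6 := hσ0nn x
      linarith
    have hnotodd := even_totalDegree_of_nonneg (σ' l) (hσ'nn l)
    have hne : (σ' l).totalDegree ≠ 2 * k - 1 := by
      intro h
      exact hnotodd ⟨k - 1, by omega⟩
    omega
  -- riesz computation
  have hrz : riesz p y = MvPolynomial.eval a p + riesz (zmap Δ σ0) y +
      ∑ l, riesz (MvPolynomial.X l * σ' l) y := by
    conv_lhs => rw [hfinal]
    rw [riesz_add, riesz_add, riesz_add, riesz_C, hy0, mul_one, riesz_finset_sum,
      riesz_finset_sum]
    have hlin : ∀ j, riesz (d j • (MvPolynomial.X j - MvPolynomial.C (a j))) y = 0 := by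
      intro j
      rw [riesz_smul, riesz_sub, riesz_X, riesz_C, hy0, mul_one]
      by_cases h : j ∈ Δ
      · have : a j = y (Finsupp.single j 1) := by simp [haa, h]
        rw [this]; ring
      · rw [hd0 j h]; ring
    rw [Finset.sum_congr rfl fun j _ => hlin j]
    simp
  have hmom0 : 0 ≤ riesz (zmap Δ σ0) y :=
    hMom _ (isSOS_zmap hσ0sos) (zmap_mem_supported Δ σ0) hσ0deg
  have hloc' : ∀ l, 0 ≤ riesz (MvPolynomial.X l * σ' l) y := by
    intro l
    by_cases h : l ∈ Δ
    · refine hLoc l h (σ' l) (hσ'sos l) ?_ (hσ'deg l)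
      rw [hσ']
      simp only [if_pos h]
      exact zmap_mem_supported Δ (σ l)
    · have : σ' l = 0 := by rw [hσ']; simp [h]
      rw [this, mul_zero, riesz_zero]
  have hsum : 0 ≤ ∑ l, riesz (MvPolynomial.X l * σ' l) y :=
    Finset.sum_nonneg fun l _ => hloc' l
  rw [hrz]
  linarith

end Aux

open Aux

/-- Theorem 4.4: for cop-SOS convex blocks `fᵢ` and any feasible point `y*`
of the sparse moment relaxation of order `k`, the point `x* = π(y*)` is
feasible for `min{f(x) : Ax = b, Cx ≥ d, x ≥ 0}` and `f(x*) ≤ ⟨f, y*⟩`.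
Consequently, if `⟨f, y*⟩` is also a lower bound for `f` on the feasible set
(as when `y*` is optimal for the relaxation), then the relaxation value
equals the minimum and `x*` is a global minimizer. -/
theorem stmt17 (n m m1 m2 k : ℕ) (Δ : Fin m → Finset (Fin n))
    (hcover : (⋃ i, (Δ i : Set (Fin n))) = Set.univ)
    (A : Matrix (Fin m1) (Fin n) ℝ) (b : Fin m1 → ℝ)
    (C : Matrix (Fin m2) (Fin n) ℝ) (d : Fin m2 → ℝ)
    (f : Fin m → MvPolynomial (Fin n) ℝ)
    (hfsupp : ∀ i, f i ∈ MvPolynomial.supported ℝ (Δ i : Set (Fin n)))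
    (hfdeg : ∀ i, (f i).totalDegree ≤ 2 * k)
    (hfcvx : ∀ i, CopSOSConvex (f i))
    (y : (Fin n →₀ ℕ) → ℝ) (hy0 : y 0 = 1)
    (hMom : ∀ i : Fin m, ∀ σ : MvPolynomial (Fin n) ℝ,
      IsSOS σ → σ ∈ MvPolynomial.supported ℝ (Δ i : Set (Fin n)) →
      σ.totalDegree ≤ 2 * k → 0 ≤ riesz σ y)
    (hLoc : ∀ i : Fin m, ∀ j ∈ Δ i, ∀ σ : MvPolynomial (Fin n) ℝ,
      IsSOS σ → σ ∈ MvPolynomial.supported ℝ (Δ i : Set (Fin n)) →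
      σ.totalDegree ≤ 2 * k - 2 → 0 ≤ riesz (X j * σ) y)
    (xs : Fin n → ℝ) (hxs : ∀ j, xs j = y (Finsupp.single j 1))
    (hAx : A.mulVec (fun j => y (Finsupp.single j 1)) = b)
    (hCx : ∀ j, d j ≤ C.mulVec (fun j' => y (Finsupp.single j' 1)) j) :
    ((A.mulVec xs = b ∧ (∀ j, d j ≤ C.mulVec xs j) ∧ (∀ j, 0 ≤ xs j)) ∧
      eval xs (∑ i, f i) ≤ ∑ i, riesz (f i) y) ∧
    ((∀ x : Fin n → ℝ,
        A.mulVec x = b → (∀ j, d j ≤ C.mulVec x j) → (∀ j, 0 ≤ x j) →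
        (∑ i, riesz (f i) y) ≤ eval x (∑ i, f i)) →
      (eval xs (∑ i, f i) = ∑ i, riesz (f i) y ∧
        ∀ x : Fin n → ℝ,
          A.mulVec x = b → (∀ j, d j ≤ C.mulVec x j) → (∀ j, 0 ≤ x j) →
          eval xs (∑ i, f i) ≤ eval x (∑ i, f i))) := by
    classical
  have hxs' : xs = fun j => y (Finsupp.single j 1) := funext hxs
  have hxnn : ∀ j, 0 ≤ xs j := by
    intro j
    have hj : (j : Fin n) ∈ ⋃ i, (Δ i : Set (Fin n)) := by
      rw [hcover]; trivial
    obtain ⟨i, hij⟩ := Set.mem_iUnion.mp hj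
    have hij' : j ∈ Δ i := hij
    have h1 := hLoc i j hij' 1 isSOS_one (one_mem _) (by simp)
    rw [mul_one, riesz_X] at h1
    rw [hxs j]
    exact h1
  have hfeas : A.mulVec xs = b ∧ (∀ j, d j ≤ C.mulVec xs j) ∧ (∀ j, 0 ≤ xs j) := by
    refine ⟨by rw [hxs']; exact hAx, fun j => by rw [hxs']; exact hCx j, hxnn⟩
  have hjens : MvPolynomial.eval xs (∑ i, f i) ≤ ∑ i, riesz (f i) y := by
    rw [map_sum]
    refine Finset.sum_le_sum fun i _ => ?_
    rcases Nat.eq_zero_or_pos k with hk0 | hkpos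
    · -- k = 0 : f i is constant
      have hdeg0 : (f i).totalDegree = 0 := by
        have := hfdeg i; omega
      exact le_of_eq (const_case (f i) hdeg0 y hy0 xs)
    · -- k ≥ 1 : use the Jensen inequality
      have hkey := jensen k hkpos (Δ i) (f i) (hfsupp i) (hfdeg i) (hfcvx i) y hy0
        (hMom i) (hLoc i)
      have hev : MvPolynomial.eval xs (f i) =
          MvPolynomial.eval (fun j => if j ∈ Δ i then y (Finsupp.single j 1) else 0)
            (f i) := by
        conv_lhs => rw [← zmap_fix (hfsupp i)]
        rw [eval_zmap]
        have hfun : (fun j => if j ∈ Δ i then xs j else 0) =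
            (fun j => if j ∈ Δ i then y (Finsupp.single j 1) else 0) :=
          funext fun j => by by_cases h : j ∈ Δ i <;> simp [h, hxs j]
        rw [hfun]
      rw [hev]
      exact hkey
  refine ⟨⟨hfeas, hjens⟩, ?_⟩
  intro hlb
  have hge := hlb xs hfeas.1 hfeas.2.1 hfeas.2.2
  constructor
  · linarith
  · intro x hA hC hpos
    have := hlb x hA hC hpos
    linarith
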